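/- Fix an integer k ≥ 0 and R > 0, and define a(r) := R^{1/2}·I_{k+1/2}(r)/(r^{1/2}·I_{k+1/2}(R)) and b(r) := a(r) − (r/R)^k for r > 0. Then b(R) = 0, b satisfies b''(r) + (2/r)·b'(r) − (k(k+1)/r²)·b(r) = a(r) for all r > 0, and b'(R) = I_{k+3/2}(R)/I_{k+1/2}(R). -/

import Mathlib

open Filter Topology

/-- The modified Bessel function of the first kind of order `m`:
`I_m(r) = ∑ (r/2)^(m+2n) / (n! Γ(m+n+1))`. -/
noncomputable def besselI (m r : ℝ) : ℝ :=
  ∑' n : ℕ, (r / 2) ^ (m + 2 * (n : ℝ)) / ((n.factorial : ℝ) * Real.Gamma (m + (n : ℝ) + 1))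

/-- `a(r) = R^{1/2} I_{k+1/2}(r) / (r^{1/2} I_{k+1/2}(R))`. -/
noncomputable def afun (k : ℕ) (R r : ℝ) : ℝ :=
  R ^ ((1 : ℝ) / 2) * besselI ((k : ℝ) + 1 / 2) r
    / (r ^ ((1 : ℝ) / 2) * besselI ((k : ℝ) + 1 / 2) R)

/-- `b(r) = a(r) - (r/R)^k`. -/
noncomputable def bfun (k : ℕ) (R r : ℝ) : ℝ :=
  afun k R r - (r / R) ^ k

/-- auxiliary entire series `fS ν x = ∑ xⁿ/(n! Γ(ν+n+1))`. -/
noncomputable def fS (ν x : ℝ) : ℝ :=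
  ∑' n : ℕ, x ^ n / ((n.factorial : ℝ) * Real.Gamma (ν + (n : ℝ) + 1))

lemma gamma_pos {ν : ℝ} (hν : 0 < ν) (n : ℕ) : 0 < Real.Gamma (ν + (n : ℝ) + 1) :=
  Real.Gamma_pos_of_pos (by have := Nat.cast_nonneg (α := ℝ) n; linarith)

lemma gamma_rec {ν : ℝ} (hν : 0 < ν) (n : ℕ) :
    Real.Gamma (ν + ((n + 1 : ℕ) : ℝ) + 1) = (ν + n + 1) * Real.Gamma (ν + (n : ℝ) + 1) := by
  have h : ν + ((n + 1 : ℕ) : ℝ) + 1 = (ν + (n : ℝ) + 1) + 1 := by push_cast; ring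
  rw [h, Real.Gamma_add_one (by have := Nat.cast_nonneg (α := ℝ) n; positivity)]

lemma fS_summable {ν : ℝ} (hν : 0 < ν) (x : ℝ) :
    Summable (fun n : ℕ => x ^ n / ((n.factorial : ℝ) * Real.Gamma (ν + (n : ℝ) + 1))) := by
  apply summable_of_ratio_norm_eventually_le (r := 1/2) (by norm_num)
  filter_upwards [eventually_ge_atTop (⌈2 * |x|⌉₊ + 1)] with n hn
  have hg := gamma_pos hν n
  have hg' := gamma_pos hν (n + 1)
  have hf : (0:ℝ) < n.factorial := by exact_mod_cast n.factorial_pos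
  have hrec := gamma_rec hν n
  have hfs : ((n+1).factorial : ℝ) = (n+1) * n.factorial := by
    rw [Nat.factorial_succ]; push_cast; ring
  have hxn : |x| ≤ (n : ℝ) := by
    calc |x| ≤ 2 * |x| := by nlinarith [abs_nonneg x]
    _ ≤ (⌈2 * |x|⌉₊ : ℝ) := Nat.le_ceil _
    _ ≤ (n : ℝ) := by exact_mod_cast Nat.le_of_succ_le hn
  have e1 : ‖x ^ (n+1) / (((n+1).factorial : ℝ) * Real.Gamma (ν + ((n+1:ℕ) : ℝ) + 1))‖
      = |x| ^ (n+1) / (((n+1).factorial : ℝ) * Real.Gamma (ν + ((n+1:ℕ) : ℝ) + 1)) := by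
    rw [Real.norm_eq_abs, abs_div, abs_pow,
      abs_of_pos (mul_pos (by exact_mod_cast (n+1).factorial_pos) hg')]
  have e2 : ‖x ^ n / ((n.factorial : ℝ) * Real.Gamma (ν + (n : ℝ) + 1))‖
      = |x| ^ n / ((n.factorial : ℝ) * Real.Gamma (ν + (n : ℝ) + 1)) := by
    rw [Real.norm_eq_abs, abs_div, abs_pow, abs_of_pos (mul_pos hf hg)]
  rw [e1, e2, hrec, hfs]
  rw [show (1:ℝ)/2 * (|x|^n / ((n.factorial:ℝ) * Real.Gamma (ν + (n:ℝ) + 1)))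
      = |x|^n / (2 * ((n.factorial:ℝ) * Real.Gamma (ν + (n:ℝ) + 1))) by ring]
  rw [div_le_div_iff₀ (by positivity) (by positivity), pow_succ]
  have hn0 : (0:ℝ) ≤ (n:ℝ) := Nat.cast_nonneg n
  have hx0 : (0:ℝ) ≤ |x|^n := by positivity
  have hkey : 2*|x| ≤ ((n:ℝ)+1)*(ν+n+1) := by nlinarith
  nlinarith [mul_le_mul_of_nonneg_left hkey
    (mul_nonneg hx0 (le_of_lt (mul_pos hf hg)))]

lemma fS_pos {ν : ℝ} (hν : 0 < ν) {x : ℝ} (hx : 0 ≤ x) : 0 < fS ν x := by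
  refine Summable.tsum_pos (fS_summable hν x) (fun n => by positivity) 0 ?_
  have := gamma_pos hν 0
  simp only [pow_zero, Nat.factorial_zero, Nat.cast_one, one_mul]
  positivity

lemma fS_hasDerivAt {ν : ℝ} (hν : 0 < ν) (x : ℝ) :
    HasDerivAt (fun y => fS ν y) (fS (ν + 1) x) x := by
  have hMpos : (0:ℝ) < |x| + 1 := by positivity
  set M : ℝ := |x| + 1 with hM
  have hM1 : (1:ℝ) ≤ M := by rw [hM]; linarith [abs_nonneg x]
  -- the summable bound on the derivatives over the ball of radius M
  have hu : Summable (fun n : ℕ => (n : ℝ) * M ^ (n - 1) /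
      ((n.factorial : ℝ) * Real.Gamma (ν + (n : ℝ) + 1))) := by
    apply summable_of_ratio_norm_eventually_le (r := 1/2) (by norm_num)
    filter_upwards [eventually_ge_atTop (⌈2 * M⌉₊ + 1)] with n hn
    have hg := gamma_pos hν n
    have hg' := gamma_pos hν (n + 1)
    have hf : (0:ℝ) < n.factorial := by exact_mod_cast n.factorial_pos
    have hf' : (0:ℝ) < (n+1).factorial := by exact_mod_cast (n+1).factorial_pos
    have hrec := gamma_rec hν n
    have hfs : ((n+1).factorial : ℝ) = ((n:ℝ)+1) * n.factorial := by
      rw [Nat.factorial_succ]; push_cast; ring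
    have hn1 : 1 ≤ n := le_trans (Nat.le_add_left 1 _) hn
    have hMn : 2 * M ≤ (n : ℝ) := by
      calc 2 * M ≤ (⌈2 * M⌉₊ : ℝ) := Nat.le_ceil _
      _ ≤ (n : ℝ) := by exact_mod_cast Nat.le_of_succ_le hn
    have hsub2 : M ^ (n - 1) * M = M ^ n := by
      rw [← pow_succ]; congr 1; omega
    rw [Real.norm_eq_abs, Real.norm_eq_abs,
      abs_of_nonneg (div_nonneg (mul_nonneg (Nat.cast_nonneg _) (pow_nonneg hMpos.le _))
        (mul_pos hf' hg').le),
      abs_of_nonneg (div_nonneg (mul_nonneg (Nat.cast_nonneg _) (pow_nonneg hMpos.le _))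
        (mul_pos hf hg).le),
      hrec, hfs, show n + 1 - 1 = n from rfl]
    rw [show (1:ℝ)/2 * ((n:ℝ) * M ^ (n-1) / ((n.factorial:ℝ) * Real.Gamma (ν + (n:ℝ) + 1)))
        = (n:ℝ) * M ^ (n-1) / (2 * ((n.factorial:ℝ) * Real.Gamma (ν + (n:ℝ) + 1))) by ring]
    rw [div_le_div_iff₀ (by positivity) (by positivity)]
    push_cast
    have hkey : ((n:ℝ)+1) * M * 2 ≤ ((n:ℝ)+1) * ((n:ℝ) * (ν + (n:ℝ) + 1)) := by
      have h1 : (1:ℝ) ≤ ν + n + 1 := by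
        have := Nat.cast_nonneg (α := ℝ) n; linarith
      have hp : (0:ℝ) ≤ (n:ℝ)+1 := by positivity
      calc ((n:ℝ)+1) * M * 2 = ((n:ℝ)+1) * (2*M) := by ring
        _ ≤ ((n:ℝ)+1) * (n:ℝ) := mul_le_mul_of_nonneg_left hMn hp
        _ = ((n:ℝ)+1) * ((n:ℝ) * 1) := by ring
        _ ≤ ((n:ℝ)+1) * ((n:ℝ) * (ν + (n:ℝ) + 1)) := by
            apply mul_le_mul_of_nonneg_left _ hp
            exact mul_le_mul_of_nonneg_left h1 (Nat.cast_nonneg n)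
    have hT : (0:ℝ) ≤ M ^ (n-1) * ((n.factorial:ℝ) * Real.Gamma (ν + (n:ℝ) + 1)) := by
      positivity
    calc ((n:ℝ)+1) * M ^ n * (2 * ((n.factorial:ℝ) * Real.Gamma (ν + (n:ℝ) + 1)))
        = (((n:ℝ)+1) * M * 2) * (M ^ (n-1) * ((n.factorial:ℝ) * Real.Gamma (ν + (n:ℝ) + 1))) := by
          rw [← hsub2]; ring
      _ ≤ (((n:ℝ)+1) * ((n:ℝ) * (ν + (n:ℝ) + 1)))
            * (M ^ (n-1) * ((n.factorial:ℝ) * Real.Gamma (ν + (n:ℝ) + 1))) := by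
          exact mul_le_mul_of_nonneg_right hkey hT
      _ = (n:ℝ) * M ^ (n-1) * (((n:ℝ)+1) * (n.factorial:ℝ)
            * ((ν + (n:ℝ) + 1) * Real.Gamma (ν + (n:ℝ) + 1))) := by ring
  -- bound on the derivatives
  have hbound : ∀ (n : ℕ) (y : ℝ), y ∈ Metric.ball (0:ℝ) M →
      ‖(n : ℝ) * y ^ (n - 1) / ((n.factorial : ℝ) * Real.Gamma (ν + (n : ℝ) + 1))‖
        ≤ (n : ℝ) * M ^ (n - 1) / ((n.factorial : ℝ) * Real.Gamma (ν + (n : ℝ) + 1)) := by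
    intro n y hy
    have hg := gamma_pos hν n
    have hf : (0:ℝ) < n.factorial := by exact_mod_cast n.factorial_pos
    have hyM : |y| ≤ M := by
      have := mem_ball_iff_norm.mp hy
      simp only [sub_zero, Real.norm_eq_abs] at this
      linarith
    rw [Real.norm_eq_abs, abs_div, abs_of_pos (mul_pos hf hg), abs_mul, abs_pow, Nat.abs_cast]
    gcongr
  have hxball : x ∈ Metric.ball (0:ℝ) M := by
    rw [Metric.mem_ball, Real.dist_eq, sub_zero, hM]; linarith
  have key := hasDerivAt_tsum_of_isPreconnected hu (Metric.isOpen_ball (x := (0:ℝ)) (ε := M))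
    ((convex_ball (0:ℝ) M).isPreconnected)
    (g := fun (n : ℕ) (y : ℝ) => y ^ n / ((n.factorial : ℝ) * Real.Gamma (ν + (n : ℝ) + 1)))
    (g' := fun (n : ℕ) (y : ℝ) =>
      (n : ℝ) * y ^ (n - 1) / ((n.factorial : ℝ) * Real.Gamma (ν + (n : ℝ) + 1)))
    (fun n y _ => (hasDerivAt_pow n y).div_const _) hbound
    (y₀ := x) hxball (fS_summable hν x) (y := x) hxball
  have hsumm : Summable (fun n : ℕ =>
      (n : ℝ) * x ^ (n - 1) / ((n.factorial : ℝ) * Real.Gamma (ν + (n : ℝ) + 1))) :=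
    hu.of_norm_bounded (fun n => hbound n x hxball)
  refine key.congr_deriv (Eq.symm ?_)
  rw [fS, hsumm.tsum_eq_zero_add]
  simp only [Nat.cast_zero, zero_mul, pow_zero, Nat.factorial_zero, Nat.cast_one, one_mul,
    zero_div, zero_add]
  apply tsum_congr
  intro n
  have hg := gamma_pos hν n
  have hf : (0:ℝ) < n.factorial := by exact_mod_cast n.factorial_pos
  have hrec := gamma_rec hν n
  have hfs : ((n+1).factorial : ℝ) = ((n:ℝ)+1) * n.factorial := by
    rw [Nat.factorial_succ]; push_cast; ring
  have harg : ν + 1 + (n : ℝ) + 1 = ν + ((n+1 : ℕ) : ℝ) + 1 := by push_cast; ring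
  rw [harg, hrec, hfs, show n + 1 - 1 = n from rfl]
  push_cast
  have h1 : ((n:ℝ)+1) ≠ 0 := by positivity
  field_simp

lemma fS_identity {ν : ℝ} (hν : 0 < ν) (x : ℝ) :
    fS ν x = (ν + 1) * fS (ν + 1) x + x * fS (ν + 2) x := by
  have h1 := fS_summable hν x
  have h2 := fS_summable (by linarith : (0:ℝ) < ν + 1) x
  have h3 := fS_summable (by linarith : (0:ℝ) < ν + 2) x
  have hsub : Summable (fun n : ℕ =>
      x ^ n / ((n.factorial : ℝ) * Real.Gamma (ν + (n : ℝ) + 1))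
        - (ν + 1) * (x ^ n / ((n.factorial : ℝ) * Real.Gamma (ν + 1 + (n : ℝ) + 1)))) :=
    h1.sub (h2.mul_left _)
  have key : fS ν x - (ν + 1) * fS (ν + 1) x = x * fS (ν + 2) x := by
    rw [fS, fS, fS, ← tsum_mul_left, ← tsum_mul_left, ← Summable.tsum_sub h1 (h2.mul_left _)]
    rw [hsub.tsum_eq_zero_add]
    have hzero : x ^ 0 / ((Nat.factorial 0 : ℝ) * Real.Gamma (ν + ((0:ℕ) : ℝ) + 1))
        - (ν + 1) * (x ^ 0 / ((Nat.factorial 0 : ℝ) * Real.Gamma (ν + 1 + ((0:ℕ) : ℝ) + 1))) = 0 := by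
      have hΓ : Real.Gamma (ν + 1 + ((0:ℕ):ℝ) + 1) = (ν + 1) * Real.Gamma (ν + ((0:ℕ):ℝ) + 1) := by
        rw [show ν + 1 + ((0:ℕ):ℝ) + 1 = (ν + ((0:ℕ):ℝ) + 1) + 1 by push_cast; ring,
          Real.Gamma_add_one (by push_cast; linarith)]
        push_cast; ring_nf
      rw [hΓ]
      have := gamma_pos hν 0
      have hν1 : ν + 1 ≠ 0 := by linarith
      field_simp
      ring
    rw [hzero, zero_add]
    apply tsum_congr
    intro n
    have hg := gamma_pos hν (n + 1)
    have hg2 := gamma_pos (by linarith : (0:ℝ) < ν + 1) n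
    have hf : (0:ℝ) < n.factorial := by exact_mod_cast n.factorial_pos
    have hfs : ((n+1).factorial : ℝ) = ((n:ℝ)+1) * n.factorial := by
      rw [Nat.factorial_succ]; push_cast; ring
    -- Γ(ν+1+(n+1)+1) = (ν+n+2) Γ(ν+1+n+1) and Γ(ν+(n+1)+1) = Γ(ν+1+n+1)
    have e1 : Real.Gamma (ν + ((n+1:ℕ):ℝ) + 1) = Real.Gamma (ν + 1 + (n:ℝ) + 1) := by
      congr 1; push_cast; ring
    have e2 : Real.Gamma (ν + 1 + ((n+1:ℕ):ℝ) + 1)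
        = (ν + (n:ℝ) + 2) * Real.Gamma (ν + 1 + (n:ℝ) + 1) := by
      rw [show ν + 1 + ((n+1:ℕ):ℝ) + 1 = (ν + 1 + (n:ℝ) + 1) + 1 by push_cast; ring,
        Real.Gamma_add_one (by have := Nat.cast_nonneg (α := ℝ) n; positivity)]
      ring
    have e3 : Real.Gamma (ν + 2 + (n:ℝ) + 1) = (ν + (n:ℝ) + 2) * Real.Gamma (ν + 1 + (n:ℝ) + 1) := by
      rw [show ν + 2 + (n:ℝ) + 1 = (ν + 1 + (n:ℝ) + 1) + 1 by ring,
        Real.Gamma_add_one (by have := Nat.cast_nonneg (α := ℝ) n; positivity)]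
      ring
    rw [e1, e2, e3, hfs]
    have hp : (0:ℝ) < ν + (n:ℝ) + 2 := by have := Nat.cast_nonneg (α := ℝ) n; linarith
    have hn1 : ((n:ℝ)+1) ≠ 0 := by positivity
    field_simp
    ring
  linarith [key]

lemma besselI_eq_fS (ν : ℝ) {r : ℝ} (hr : 0 < r) :
    besselI ν r = (r / 2) ^ ν * fS ν (r ^ 2 / 4) := by
  have h2 : (0:ℝ) < r / 2 := by linarith
  rw [besselI, fS, ← tsum_mul_left]
  apply tsum_congr
  intro n
  have e : (r / 2) ^ (ν + 2 * (n : ℝ)) = (r / 2) ^ ν * (r ^ 2 / 4) ^ n := by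
    rw [Real.rpow_add h2, show (2 * (n:ℝ)) = ((2 * n : ℕ) : ℝ) by push_cast; ring,
      Real.rpow_natCast, pow_mul]
    congr 2
    field_simp
    ring
  rw [e]
  ring

lemma besselI_pos {ν : ℝ} (hν : 0 < ν) {r : ℝ} (hr : 0 < r) : 0 < besselI ν r := by
  rw [besselI_eq_fS ν hr]
  have h1 : (0:ℝ) < (r / 2) ^ ν := Real.rpow_pos_of_pos (by linarith) ν
  have h2 : 0 < fS ν (r ^ 2 / 4) := fS_pos hν (by positivity)
  positivity

lemma cast_mul_pow_sub_one (m : ℕ) {r : ℝ} (hr : r ≠ 0) :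
    (m : ℝ) * r ^ (m - 1) = (m : ℝ) / r * r ^ m := by
  cases m with
  | zero => simp
  | succ s =>
    rw [show s + 1 - 1 = s from rfl, pow_succ]
    field_simp

lemma hasDerivAt_fS_sq {μ : ℝ} (hμ : 0 < μ) (r : ℝ) :
    HasDerivAt (fun y : ℝ => fS μ (y ^ 2 / 4)) (r / 2 * fS (μ + 1) (r ^ 2 / 4)) r := by
  have h1 : HasDerivAt (fun y : ℝ => y ^ 2 / 4) (r / 2) r := by
    have := (hasDerivAt_pow 2 r).div_const 4
    refine this.congr_deriv ?_
    push_cast; ring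
  have h2 := (fS_hasDerivAt hμ (r ^ 2 / 4)).comp r h1
  refine h2.congr_deriv ?_
  ring

lemma hasDerivAt_pow_mul_fS {μ : ℝ} (hμ : 0 < μ) (m : ℕ) {r : ℝ} (hr : 0 < r) :
    HasDerivAt (fun y : ℝ => y ^ m * fS μ (y ^ 2 / 4))
      ((m : ℝ) / r * (r ^ m * fS μ (r ^ 2 / 4)) + r ^ (m + 1) * fS (μ + 1) (r ^ 2 / 4) / 2) r := by
  have h := (hasDerivAt_pow m r).mul (hasDerivAt_fS_sq hμ r)
  refine h.congr_deriv ?_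
  rw [cast_mul_pow_sub_one m hr.ne', pow_succ]
  ring

/-- The constant `c = R^{1/2} / (2^{k+1/2} I_{k+1/2}(R))`. -/
noncomputable def cc (k : ℕ) (R : ℝ) : ℝ :=
  R ^ ((1:ℝ)/2) / ((2:ℝ) ^ ((k:ℝ) + 1/2) * besselI ((k:ℝ) + 1/2) R)

/-- bfun on the positive axis. -/
noncomputable def Ffun (k : ℕ) (R : ℝ) : ℝ → ℝ := fun r =>
  cc k R * (r ^ k * fS ((k:ℝ) + 1/2) (r ^ 2 / 4)) - r ^ k / R ^ k

/-- derivative of bfun on the positive axis. -/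
noncomputable def Gfun (k : ℕ) (R : ℝ) : ℝ → ℝ := fun r =>
  cc k R * ((k:ℝ) / r * (r ^ k * fS ((k:ℝ) + 1/2) (r ^ 2 / 4))
      + r ^ (k+1) * fS ((k:ℝ) + 1/2 + 1) (r ^ 2 / 4) / 2)
    - (k:ℝ) / r * (r ^ k / R ^ k)

lemma afun_eq (k : ℕ) {R r : ℝ} (hR : 0 < R) (hr : 0 < r) :
    afun k R r = cc k R * (r ^ k * fS ((k:ℝ) + 1/2) (r ^ 2 / 4)) := by
  have hν : (0:ℝ) < (k:ℝ) + 1/2 := by positivity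
  have hI := besselI_pos hν hR
  have h2ν : (0:ℝ) < (2:ℝ) ^ ((k:ℝ) + 1/2) := Real.rpow_pos_of_pos two_pos _
  have hr12 : (0:ℝ) < r ^ ((1:ℝ)/2) := Real.rpow_pos_of_pos hr _
  have hdiv : (r / 2) ^ ((k:ℝ) + 1/2) = r ^ ((k:ℝ) + 1/2) / (2:ℝ) ^ ((k:ℝ) + 1/2) :=
    Real.div_rpow hr.le two_pos.le _
  have hsplit : r ^ ((k:ℝ) + 1/2) = r ^ k * r ^ ((1:ℝ)/2) := by
    rw [Real.rpow_add hr, Real.rpow_natCast]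
  rw [afun, besselI_eq_fS _ hr, cc, hdiv, hsplit]
  have gen : ∀ A B C D E F : ℝ, F ≠ 0 → D ≠ 0 → E ≠ 0 →
      A * ((B * F) / D * C) / (F * E) = A / (D * E) * (B * C) := by
    intros A B C D E F hF hD hE
    field_simp
  exact gen _ _ _ _ _ _ hr12.ne' h2ν.ne' hI.ne'

lemma bfun_eq (k : ℕ) {R r : ℝ} (hR : 0 < R) (hr : 0 < r) :
    bfun k R r = Ffun k R r := by
  rw [bfun, afun_eq k hR hr, Ffun, div_pow]

lemma hasDerivAt_Ffun (k : ℕ) {R r : ℝ} (hR : 0 < R) (hr : 0 < r) :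
    HasDerivAt (Ffun k R) (Gfun k R r) r := by
  have hν : (0:ℝ) < (k:ℝ) + 1/2 := by positivity
  have h1 := (hasDerivAt_pow_mul_fS hν k hr).const_mul (cc k R)
  have h2 := (hasDerivAt_pow k r).div_const (R ^ k)
  have hval : Gfun k R r = cc k R * ((k:ℝ) / r * (r ^ k * fS ((k:ℝ) + 1/2) (r ^ 2 / 4))
      + r ^ (k+1) * fS ((k:ℝ) + 1/2 + 1) (r ^ 2 / 4) / 2) - (k:ℝ) * r ^ (k-1) / R ^ k := by
    rw [Gfun, cast_mul_pow_sub_one k hr.ne']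
    ring
  rw [show Ffun k R = fun y => cc k R * (y ^ k * fS ((k:ℝ) + 1/2) (y ^ 2 / 4)) - y ^ k / R ^ k
      from rfl, hval]
  exact h1.sub h2

lemma hasDerivAt_Gfun (k : ℕ) {R r : ℝ} (hR : 0 < R) (hr : 0 < r) :
    HasDerivAt (Gfun k R)
      (cc k R * ((-((k:ℝ) / r ^ 2)) * (r ^ k * fS ((k:ℝ) + 1/2) (r ^ 2 / 4))
          + (k:ℝ) / r * ((k:ℝ) / r * (r ^ k * fS ((k:ℝ) + 1/2) (r ^ 2 / 4))
              + r ^ (k+1) * fS ((k:ℝ) + 1/2 + 1) (r ^ 2 / 4) / 2)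
          + (((k+1:ℕ):ℝ) / r * (r ^ (k+1) * fS ((k:ℝ) + 1/2 + 1) (r ^ 2 / 4))
              + r ^ (k+1+1) * fS ((k:ℝ) + 1/2 + 1 + 1) (r ^ 2 / 4) / 2) / 2)
        - ((-((k:ℝ) / r ^ 2)) * (r ^ k / R ^ k) + (k:ℝ) / r * ((k:ℝ) * r ^ (k-1) / R ^ k))) r := by
  have hν : (0:ℝ) < (k:ℝ) + 1/2 := by positivity
  have hν1 : (0:ℝ) < (k:ℝ) + 1/2 + 1 := by positivity
  have h1 : HasDerivAt (fun y : ℝ => (k:ℝ) / y) (-((k:ℝ) / r ^ 2)) r := by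
    have := (hasDerivAt_inv hr.ne').const_mul (k:ℝ)
    refine this.congr_deriv ?_
    field_simp
  have h2 := hasDerivAt_pow_mul_fS hν k hr
  have h3 := hasDerivAt_pow_mul_fS hν1 (k+1) hr
  have h4 := (hasDerivAt_pow k r).div_const (R ^ k)
  exact (((h1.mul h2).add (h3.div_const 2)).const_mul (cc k R)).sub (h1.mul h4)

theorem stmt5 (k : ℕ) (R : ℝ) (hR : 0 < R) :
    bfun k R R = 0 ∧
    (∀ r : ℝ, 0 < r →
      deriv (deriv (bfun k R)) r + (2 / r) * deriv (bfun k R) r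
        - ((k : ℝ) * ((k : ℝ) + 1) / r ^ 2) * bfun k R r = afun k R r) ∧
    deriv (bfun k R) R = besselI ((k : ℝ) + 3 / 2) R / besselI ((k : ℝ) + 1 / 2) R := by
  have hν : (0:ℝ) < (k:ℝ) + 1/2 := by positivity
  have hI : 0 < besselI ((k:ℝ) + 1/2) R := besselI_pos hν hR
  have hR12 : (0:ℝ) < R ^ ((1:ℝ)/2) := Real.rpow_pos_of_pos hR _
  have haR : afun k R R = 1 := by
    rw [afun, div_self (by positivity)]
  -- derivative identification
  have hbF : ∀ s : ℝ, s ∈ Set.Ioi (0:ℝ) → bfun k R s = Ffun k R s :=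
    fun s hs => bfun_eq k hR hs
  have hderiv1 : ∀ r : ℝ, 0 < r → deriv (bfun k R) r = Gfun k R r := by
    intro r hr
    have hev : bfun k R =ᶠ[nhds r] Ffun k R :=
      Filter.eventuallyEq_of_mem (Ioi_mem_nhds hr) hbF
    rw [hev.deriv_eq]
    exact (hasDerivAt_Ffun k hR hr).deriv
  refine ⟨?_, ?_, ?_⟩
  · -- b(R) = 0
    rw [bfun, haR, div_self hR.ne', one_pow, sub_self]
  · -- the ODE
    intro r hr
    have hderiv2 : deriv (deriv (bfun k R)) r = deriv (Gfun k R) r := by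
      have hev : deriv (bfun k R) =ᶠ[nhds r] Gfun k R :=
        Filter.eventuallyEq_of_mem (Ioi_mem_nhds hr) (fun s hs => hderiv1 s hs)
      exact hev.deriv_eq
    rw [hderiv2, (hasDerivAt_Gfun k hR hr).deriv, hderiv1 r hr, bfun_eq k hR hr,
      afun_eq k hR hr]
    simp only [Ffun, Gfun]
    rw [fS_identity hν (r ^ 2 / 4)]
    rw [show (k:ℝ) + 1/2 + 1 + 1 = (k:ℝ) + 1/2 + 2 by ring,
      cast_mul_pow_sub_one k hr.ne']
    have hRk : (R:ℝ) ^ k ≠ 0 := (pow_pos hR k).ne'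
    push_cast
    field_simp
    ring
  · -- b'(R) = I_{k+3/2}(R)/I_{k+1/2}(R)
    rw [hderiv1 R hR]
    simp only [Gfun, cc]
    have h2ν : (0:ℝ) < (2:ℝ) ^ ((k:ℝ) + 1/2) := Real.rpow_pos_of_pos two_pos _
    have hA : (0:ℝ) < fS ((k:ℝ) + 1/2) (R ^ 2 / 4) := fS_pos hν (by positivity)
    have e32 : (k:ℝ) + 3/2 = (k:ℝ) + 1/2 + 1 := by ring
    rw [e32, besselI_eq_fS ((k:ℝ) + 1/2 + 1) hR, besselI_eq_fS ((k:ℝ) + 1/2) hR]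
    have hhalf : (0:ℝ) < R/2 := by linarith
    have e1 : (2:ℝ) ^ ((k:ℝ) + 1/2) * (R/2) ^ ((k:ℝ) + 1/2) = R ^ k * R ^ ((1:ℝ)/2) := by
      rw [← Real.mul_rpow two_pos.le hhalf.le, show (2:ℝ) * (R/2) = R by ring,
        Real.rpow_add hR, Real.rpow_natCast]
    have e2 : (R/2) ^ ((k:ℝ) + 1/2 + 1) = (R/2) ^ ((k:ℝ) + 1/2) * (R/2) := by
      rw [Real.rpow_add_one hhalf.ne']
    have hrp : (0:ℝ) < (R/2) ^ ((k:ℝ) + 1/2) := Real.rpow_pos_of_pos hhalf _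
    have hY : (R/2) ^ ((k:ℝ) + 1/2) = R ^ k * R ^ ((1:ℝ)/2) / (2:ℝ) ^ ((k:ℝ) + 1/2) := by
      rw [eq_div_iff h2ν.ne']
      linarith [e1]
    have gen2 : ∀ X T A B P Rv Kk : ℝ, X ≠ 0 → T ≠ 0 → A ≠ 0 → P ≠ 0 → Rv ≠ 0 →
        X / (T * (P * X / T * A)) * (Kk / Rv * (P * A) + P * Rv * B / 2) - Kk / Rv * 1
          = P * X / T * (Rv / 2) * B / (P * X / T * A) := by
      intros X T A B P Rv Kk hX hT hA hP hRv
      field_simp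
      ring
    rw [e2, div_self (pow_pos hR k).ne', hY, pow_succ]
    exact gen2 _ _ _ _ _ _ _ hR12.ne' h2ν.ne' hA.ne' (pow_pos hR k).ne' hR.ne'
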